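/- Let A be a unital C*-algebra, let p ∈ A be a projection, let w ∈ A be a unitary, and let v ∈ A satisfy v·p·v* = w·p·w*. Define u = v·p + w·(1 − p). Then u·u* = 1, and for every positive tracial linear functional τ on A one has ‖u − 1‖_{2,τ} ≤ ‖(v − 1)p‖_{2,τ} + ‖(w − 1)(1 − p)‖_{2,τ}. -/
import Mathlib


open scoped ComplexOrder

/-- The 2-seminorm `‖x‖_{2,τ} = (τ(x*x))^{1/2}` associated to a positive tracial
linear functional `τ`. -/
noncomputable def norm2 {A : Type*} [NonUnitalRing A] [StarRing A] [Module ℂ A]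
    (τ : A →ₗ[ℂ] ℂ) (x : A) : ℝ :=
  Real.sqrt (τ (star x * x)).re

lemma sqrt_add_le' {a b : ℝ} (ha : 0 ≤ a) (hb : 0 ≤ b) :
    Real.sqrt (a + b) ≤ Real.sqrt a + Real.sqrt b := by
  have h : a + b ≤ (Real.sqrt a + Real.sqrt b) ^ 2 := by
    have := Real.sqrt_nonneg a
    have := Real.sqrt_nonneg b
    have ha' := Real.sq_sqrt ha
    have hb' := Real.sq_sqrt hb
    nlinarith [mul_nonneg (Real.sqrt_nonneg a) (Real.sqrt_nonneg b)]
  calc Real.sqrt (a + b) ≤ Real.sqrt ((Real.sqrt a + Real.sqrt b) ^ 2) :=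
        Real.sqrt_le_sqrt h
    _ = Real.sqrt a + Real.sqrt b := by
        rw [Real.sqrt_sq (by positivity)]

/-- Let `p` be a projection in a unital C*-algebra `A`, let `w` be a unitary and let
`v ∈ A` satisfy `vpv* = wpw*`.  Then `u = vp + w(1 - p)` satisfies `uu* = 1` and, for any
positive tracial linear functional `τ`,
`‖u - 1‖_{2,τ} ≤ ‖(v - 1)p‖_{2,τ} + ‖(w - 1)(1 - p)‖_{2,τ}`. -/
theorem glued_unitary_estimate
    {A : Type*} [CStarAlgebra A]
    (p : A) (hpproj : star p = p ∧ p * p = p)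
    (w : A) (hw : star w * w = 1 ∧ w * star w = 1)
    (v : A) (hvw : v * p * star v = w * p * star w) :
    (v * p + w * (1 - p)) * star (v * p + w * (1 - p)) = 1 ∧
    ∀ τ : A →ₗ[ℂ] ℂ, (∀ x : A, 0 ≤ τ (star x * x)) → (∀ x y : A, τ (x * y) = τ (y * x)) →
      norm2 τ (v * p + w * (1 - p) - 1) ≤
        norm2 τ ((v - 1) * p) + norm2 τ ((w - 1) * (1 - p)) := by
  obtain ⟨hps, hpp⟩ := hpproj
  obtain ⟨hw1, hw2⟩ := hw
  have hq : (1 - p) * p = 0 := by rw [sub_mul, one_mul, hpp, sub_self]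
  have hq' : p * (1 - p) = 0 := by rw [mul_sub, mul_one, hpp, sub_self]
  constructor
  · have : (v * p + w * (1 - p)) * star (v * p + w * (1 - p)) =
        v * (p * p) * star v + v * (p * (1 - p)) * star w
          + w * ((1 - p) * p) * star v + w * ((1 - p) * (1 - p)) * star w := by
      simp only [star_add, star_mul, star_sub, star_one, hps]
      noncomm_ring
    have h1p : (1 - p) * (1 - p) = 1 - p := by
      rw [sub_mul, one_mul, hq', sub_zero]
    rw [this, hq, hq', hpp, h1p]
    simp only [mul_zero, zero_mul, add_zero, zero_add]
    rw [hvw]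
    have h2 : w * p * star w + w * (1 - p) * star w = w * star w := by noncomm_ring
    rw [h2, hw2]
  · intro τ hpos htr
    set a := (v - 1) * p with ha
    set b := (w - 1) * (1 - p) with hb
    have hu : v * p + w * (1 - p) - 1 = a + b := by rw [ha, hb]; noncomm_ring
    have hcross1 : τ (star a * b) = 0 := by
      have : star a * b = (p * (star (v - 1) * (w - 1))) * (1 - p) := by
        rw [ha, hb, star_mul, hps]; noncomm_ring
      rw [this, htr, ← mul_assoc, hq, zero_mul, map_zero]
    have hcross2 : τ (star b * a) = 0 := by
      have : star b * a = ((1 - p) * (star (w - 1) * (v - 1))) * p := by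
        rw [ha, hb, star_mul, star_sub, star_one, hps]; noncomm_ring
      rw [this, htr, ← mul_assoc, hq', zero_mul, map_zero]
    have hexp : star (a + b) * (a + b) =
        star a * a + star a * b + star b * a + star b * b := by
      simp only [star_add, add_mul, mul_add, add_assoc]
      abel
    have hτ : τ (star (a + b) * (a + b)) = τ (star a * a) + τ (star b * b) := by
      rw [hexp, map_add, map_add, map_add, hcross1, hcross2, add_zero, add_zero]
    have hra : 0 ≤ (τ (star a * a)).re := (Complex.le_def.mp (hpos a)).1
    have hrb : 0 ≤ (τ (star b * b)).re := (Complex.le_def.mp (hpos b)).1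
    rw [hu]
    unfold norm2
    rw [hτ, Complex.add_re]
    exact sqrt_add_le' hra hrb
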